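/- For every integer n ≥ 2, the neighbour-distinguishing index of the complete symmetric digraph K_n* equals n, i.e., ndi(K_n*) = Δ*(K_n*) + 1 = n. -/
import Mathlib


open Finset

section Defs

variable {V : Type*}

/-- A (proper) arc-colouring: arcs sharing a tail, or sharing a head, get distinct colours. -/
def ProperArc (A : V → V → Prop) (γ : V → V → ℕ) : Prop :=
  (∀ u v w, A u v → A u w → v ≠ w → γ u v ≠ γ u w) ∧
  (∀ u v w, A u v → A w v → u ≠ w → γ u v ≠ γ w v)

/-- Colours appearing on outgoing arcs of `u`. -/
def outColors (A : V → V → Prop) (γ : V → V → ℕ) (u : V) : Set ℕ :=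
  {c | ∃ v, A u v ∧ γ u v = c}

/-- Colours appearing on incoming arcs of `u`. -/
def inColors (A : V → V → Prop) (γ : V → V → ℕ) (u : V) : Set ℕ :=
  {c | ∃ v, A v u ∧ γ v u = c}

/-- `u` and `v` are distinguished by `γ`. -/
def Distinguished (A : V → V → Prop) (γ : V → V → ℕ) (u v : V) : Prop :=
  (outColors A γ u, inColors A γ u) ≠ (outColors A γ v, inColors A γ v)

/-- Neighbour-distinguishing arc-colouring. -/
def NDArc (A : V → V → Prop) (γ : V → V → ℕ) : Prop :=
  ∀ u v, A u v → Distinguished A γ u v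

/-- `D` has a neighbour-distinguishing proper arc-colouring with `k` colours. -/
def HasNDColoring (A : V → V → Prop) (k : ℕ) : Prop :=
  ∃ γ : V → V → ℕ, (∀ u v, A u v → γ u v < k) ∧ ProperArc A γ ∧ NDArc A γ

/-- `D` has a proper arc-colouring with `k` colours. -/
def HasProperColoring (A : V → V → Prop) (k : ℕ) : Prop :=
  ∃ γ : V → V → ℕ, (∀ u v, A u v → γ u v < k) ∧ ProperArc A γ

/-- Outdegree of `u`. -/
def outDeg [Fintype V] (A : V → V → Prop) [DecidableRel A] (u : V) : ℕ :=
  (Finset.univ.filter fun v => A u v).card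

/-- Indegree of `u`. -/
def inDeg [Fintype V] (A : V → V → Prop) [DecidableRel A] (u : V) : ℕ :=
  (Finset.univ.filter fun v => A v u).card

/-- Δ*(D) = max{Δ⁺(D), Δ⁻(D)}. -/
def maxDeg [Fintype V] (A : V → V → Prop) [DecidableRel A] : ℕ :=
  max (Finset.univ.sup (outDeg A)) (Finset.univ.sup (inDeg A))

end Defs

lemma exists_good_M (n : ℕ) (hn : 2 ≤ n) :
    ∃ M : Fin n → Fin n → Fin n,
      (∀ i, M i i = i) ∧
      (∀ i, Function.Injective (M i)) ∧
      (∀ j, ∀ i i' : Fin n, i ≠ j → i' ≠ j → M i j = M i' j → i = i') := by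
  rcases Nat.even_or_odd n with hev | hodd
  · -- even case
    rcases eq_or_lt_of_le hn with h2 | h4
    · -- n = 2
      refine ⟨fun _ j => j, fun i => rfl, fun i a b hab => hab, ?_⟩
      intro j i i' hi hi' _
      have : (2:ℕ) = n := h2
      have h1 := i.isLt; have h2' := i'.isLt; have h3 := j.isLt
      simp only [ne_eq, Fin.ext_iff] at hi hi' ⊢
      omega
    · -- n ≥ 4 even
      have h4 : 4 ≤ n := by rcases hev with ⟨m, hm⟩; omega
      set q : ℕ := n - 1 with hq
      haveI : NeZero q := ⟨by omega⟩
      haveI : Fact (1 < q) := ⟨by omega⟩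
      set h : ZMod q := ((n / 2 : ℕ) : ZMod q) with hh
      have h2h : (2 : ZMod q) * h = 1 := by
        have hcalc : 2 * (n / 2) = q + 1 := by
          rcases hev with ⟨m, hm⟩; omega
        have : ((2 * (n / 2) : ℕ) : ZMod q) = ((q + 1 : ℕ) : ZMod q) := by rw [hcalc]
        push_cast at this
        simpa [ZMod.natCast_self] using this
      have hone : (1 : ZMod q) ≠ 0 := one_ne_zero
      set φ : ZMod q → Fin n := fun a => ⟨a.val, by have := a.val_lt; omega⟩ with hφ
      have hφinj : Function.Injective φ := by
        intro a b hab
        have : a.val = b.val := congrArg Fin.val hab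
        exact ZMod.val_injective q this
      set T : Fin n := ⟨q, by omega⟩ with hT
      have hφT : ∀ a, φ a ≠ T := by
        intro a hc
        have := congrArg Fin.val hc
        have := a.val_lt
        simp [hφ, hT] at *
        omega
      set ι : Fin n → ZMod q := fun i => ((i : ℕ) : ZMod q) with hι
      have hιval : ∀ i : Fin n, (i : ℕ) ≠ q → (ι i).val = (i : ℕ) := by
        intro i hi
        have := i.isLt
        exact ZMod.val_cast_of_lt (by omega)
      have hιinj : ∀ i j : Fin n, (i : ℕ) ≠ q → (j : ℕ) ≠ q → ι i = ι j → i = j := by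
        intro i j hi hj hij
        have := hιval i hi
        have := hιval j hj
        apply Fin.ext
        rw [← hιval i hi, ← hιval j hj, hij]
      have hmul : ∀ a b : ZMod q, h * a = h * b → a = b := by
        intro a b hab
        calc a = 2 * h * a := by rw [h2h]; ring
        _ = 2 * h * b := by rw [mul_assoc, hab, mul_assoc]
        _ = b := by rw [h2h]; ring
      refine ⟨fun i j =>
        if (i : ℕ) = q then (if (j : ℕ) = q then T else φ (ι j - h))
        else if (j : ℕ) = q then φ (ι i + h)
        else if ι j = ι i + 1 then T
        else φ (h * (ι i + ι j)), ?_, ?_, ?_⟩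
      · intro i
        simp only []
        by_cases hi : (i : ℕ) = q
        · simp only [hi, if_pos rfl]
          exact Fin.ext (by simp [hT, hi])
        · simp only [hi, if_neg hi, if_false]
          have hd : ¬ (ι i = ι i + 1) := by
            intro hc
            have : (1 : ZMod q) = 0 := by linear_combination -hc
            exact hone this
          rw [if_neg hd]
          have : h * (ι i + ι i) = ι i := by
            calc h * (ι i + ι i) = 2 * h * ι i := by ring
            _ = ι i := by rw [h2h]; ring
          rw [this]
          exact Fin.ext (by simp [hφ]; exact hιval i hi)
      · -- row injectivity
        intro i j j' heq
        simp only [] at heq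
        by_cases hi : (i : ℕ) = q
        · simp only [hi, if_pos rfl] at heq
          by_cases hj : (j : ℕ) = q <;> by_cases hj' : (j' : ℕ) = q
          · exact Fin.ext (hj.trans hj'.symm)
          · rw [if_pos hj, if_neg hj'] at heq; exact absurd heq.symm (hφT _)
          · rw [if_neg hj, if_pos hj'] at heq; exact absurd heq (hφT _)
          · rw [if_neg hj, if_neg hj'] at heq
            have := hφinj heq
            exact hιinj j j' hj hj' (by linear_combination this)
        · simp only [if_neg hi] at heq
          by_cases hj : (j : ℕ) = q <;> by_cases hj' : (j' : ℕ) = q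
          · exact Fin.ext (hj.trans hj'.symm)
          · rw [if_pos hj, if_neg hj'] at heq
            by_cases hb : ι j' = ι i + 1
            · rw [if_pos hb] at heq; exact absurd heq (hφT _)
            · rw [if_neg hb] at heq
              have he := hφinj heq
              exact absurd (by linear_combination (-2) * he + (1 - ι i - ι j') * h2h : ι j' = ι i + 1) hb
          · rw [if_neg hj, if_pos hj'] at heq
            by_cases hb : ι j = ι i + 1
            · rw [if_pos hb] at heq; exact absurd heq.symm (hφT _)
            · rw [if_neg hb] at heq
              have he := hφinj heq
              exact absurd (by linear_combination 2 * he + (1 - ι i - ι j) * h2h : ι j = ι i + 1) hb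
          · rw [if_neg hj, if_neg hj'] at heq
            by_cases hb : ι j = ι i + 1 <;> by_cases hb' : ι j' = ι i + 1
            · exact hιinj j j' hj hj' (hb.trans hb'.symm)
            · rw [if_pos hb, if_neg hb'] at heq; exact absurd heq.symm (hφT _)
            · rw [if_neg hb, if_pos hb'] at heq; exact absurd heq (hφT _)
            · rw [if_neg hb, if_neg hb'] at heq
              have he := hmul _ _ (hφinj heq)
              exact hιinj j j' hj hj' (by linear_combination he)
      · -- column injectivity off diagonal
        intro j i i' hij hij' heq
        simp only [] at heq
        by_cases hj : (j : ℕ) = q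
        · have hi : (i : ℕ) ≠ q := fun hc => hij (Fin.ext (hc.trans hj.symm))
          have hi' : (i' : ℕ) ≠ q := fun hc => hij' (Fin.ext (hc.trans hj.symm))
          rw [if_neg hi, if_neg hi', if_pos hj, if_pos hj] at heq
          have := hφinj heq
          exact hιinj i i' hi hi' (by linear_combination this)
        · by_cases hi : (i : ℕ) = q <;> by_cases hi' : (i' : ℕ) = q
          · exact Fin.ext (hi.trans hi'.symm)
          · rw [if_pos hi, if_neg hj, if_neg hi', if_neg hj] at heq
            by_cases hb : ι j = ι i' + 1
            · rw [if_pos hb] at heq; exact absurd heq (hφT _)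
            · rw [if_neg hb] at heq
              have he := hφinj heq
              exact absurd (by linear_combination 2 * he + (1 + ι i' + ι j) * h2h : ι j = ι i' + 1) hb
          · rw [if_neg hi, if_pos hi', if_neg hj, if_neg hj] at heq
            by_cases hb : ι j = ι i + 1
            · rw [if_pos hb] at heq; exact absurd heq.symm (hφT _)
            · rw [if_neg hb] at heq
              have he := hφinj heq
              exact absurd (by linear_combination (-2) * he + (1 + ι i + ι j) * h2h : ι j = ι i + 1) hb
          · rw [if_neg hi, if_neg hi', if_neg hj, if_neg hj] at heq
            by_cases hb : ι j = ι i + 1 <;> by_cases hb' : ι j = ι i' + 1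
            · exact hιinj i i' hi hi' (by linear_combination hb' - hb)
            · rw [if_pos hb, if_neg hb'] at heq; exact absurd heq.symm (hφT _)
            · rw [if_neg hb, if_pos hb'] at heq; exact absurd heq (hφT _)
            · rw [if_neg hb, if_neg hb'] at heq
              have he := hmul _ _ (hφinj heq)
              exact hιinj i i' hi hi' (by linear_combination he)
  · -- odd case
    haveI : NeZero n := ⟨by omega⟩
    set h : ZMod n := (((n + 1) / 2 : ℕ) : ZMod n) with hh
    have h2h : (2 : ZMod n) * h = 1 := by
      have hcalc : 2 * ((n + 1) / 2) = n + 1 := by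
        rcases hodd with ⟨m, hm⟩; omega
      have : ((2 * ((n + 1) / 2) : ℕ) : ZMod n) = ((n + 1 : ℕ) : ZMod n) := by rw [hcalc]
      push_cast at this
      simpa [ZMod.natCast_self] using this
    set φ : ZMod n → Fin n := fun a => ⟨a.val, a.val_lt⟩ with hφ
    have hφinj : Function.Injective φ := by
      intro a b hab
      exact ZMod.val_injective n (congrArg Fin.val hab)
    set ι : Fin n → ZMod n := fun i => ((i : ℕ) : ZMod n) with hι
    have hφι : ∀ i : Fin n, φ (ι i) = i := by
      intro i
      exact Fin.ext (ZMod.val_cast_of_lt i.isLt)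
    have hιinj : Function.Injective ι := by
      intro i j hij
      rw [← hφι i, ← hφι j, hij]
    have hmul : ∀ a b : ZMod n, h * a = h * b → a = b := by
      intro a b hab
      calc a = 2 * h * a := by rw [h2h]; ring
      _ = 2 * h * b := by rw [mul_assoc, hab, mul_assoc]
      _ = b := by rw [h2h]; ring
    refine ⟨fun i j => φ (h * (ι i + ι j)), ?_, ?_, ?_⟩
    · intro i
      simp only []
      have : h * (ι i + ι i) = ι i := by
        calc h * (ι i + ι i) = 2 * h * ι i := by ring
        _ = ι i := by rw [h2h]; ring
      rw [this, hφι]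
    · intro i j j' heq
      simp only [] at heq
      have := hmul _ _ (hφinj heq)
      exact hιinj (by linear_combination this)
    · intro j i i' _ _ heq
      simp only [] at heq
      have := hmul _ _ (hφinj heq)
      exact hιinj (by linear_combination this)

/-- ndi(K_n*) = Δ*(K_n*) + 1 = n for n ≥ 2. -/
theorem stmt10 (n : ℕ) (hn : 2 ≤ n) :
    HasNDColoring (fun u v : Fin n => u ≠ v) n ∧
    (∀ k, HasNDColoring (fun u v : Fin n => u ≠ v) k → n ≤ k) ∧
    maxDeg (fun u v : Fin n => u ≠ v) + 1 = n := by
  refine ⟨?_, ?_, ?_⟩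
  · -- upper bound
    obtain ⟨M, hd, hr, hc⟩ := exists_good_M n hn
    refine ⟨fun u v => (M u v : ℕ), fun u v _ => (M u v).isLt, ⟨?_, ?_⟩, ?_⟩
    · intro u v w _ _ hvw heq
      exact hvw (hr u (Fin.ext heq))
    · intro u v w hu hw huw heq
      exact huw (hc v u w hu hw (Fin.ext heq))
    · intro u v huv hpair
      have hout : outColors (fun u v : Fin n => u ≠ v) (fun u v => (M u v : ℕ)) u =
          outColors (fun u v : Fin n => u ≠ v) (fun u v => (M u v : ℕ)) v :=
        congrArg Prod.fst hpair
      have hmem : (u : ℕ) ∈ outColors (fun u v : Fin n => u ≠ v) (fun u v => (M u v : ℕ)) v := by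
        obtain ⟨w, hw⟩ := (Finite.injective_iff_surjective.mp (hr v)) u
        refine ⟨w, ?_, congrArg Fin.val hw⟩
        intro hvw
        apply huv
        rw [← hw, ← hvw]
        exact hd v
      rw [← hout] at hmem
      obtain ⟨w, huw, hcw⟩ := hmem
      have : M u w = M u u := by rw [hd u]; exact Fin.ext hcw
      exact huw.symm (hr u this)
  · -- lower bound
    rintro k ⟨γ, hbk, ⟨hp1, hp2⟩, hnd⟩
    by_contra hlt
    push_neg at hlt
    have hcard : ∀ u : Fin n, (Finset.univ.filter fun v => u ≠ v).card = n - 1 := by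
      intro u
      have : (Finset.univ.filter fun v : Fin n => u ≠ v) = Finset.univ.erase u := by
        ext v
        simp [ne_comm, eq_comm]
      rw [this, Finset.card_erase_of_mem (Finset.mem_univ u), Finset.card_univ, Fintype.card_fin]
    have hout : ∀ u : Fin n, outColors (fun u v : Fin n => u ≠ v) γ u = ↑(Finset.range k) := by
      intro u
      have himg : ((Finset.univ.filter fun v => u ≠ v).image (γ u)) = Finset.range k := by
        apply Finset.eq_of_subset_of_card_le
        · intro c hc
          simp only [Finset.mem_image, Finset.mem_filter] at hc
          obtain ⟨v, ⟨_, hv⟩, rfl⟩ := hc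
          exact Finset.mem_range.mpr (hbk u v hv)
        · rw [Finset.card_range, Finset.card_image_of_injOn, hcard u]
          · omega
          · intro a ha b hb hab
            by_contra hne
            exact hp1 u a b (Finset.mem_filter.mp ha).2 (Finset.mem_filter.mp hb).2 hne hab
      ext c
      simp only [outColors, Set.mem_setOf_eq, Finset.coe_range, Set.mem_Iio, ← himg,
        Finset.coe_image, Set.mem_image, Finset.mem_coe, Finset.mem_filter, Finset.mem_univ,
        true_and]
    have hin : ∀ u : Fin n, inColors (fun u v : Fin n => u ≠ v) γ u = ↑(Finset.range k) := by
      intro u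
      have hcard' : (Finset.univ.filter fun v : Fin n => v ≠ u).card = n - 1 := by
        have : (Finset.univ.filter fun v : Fin n => v ≠ u) = Finset.univ.erase u := by
          ext v; simp
        rw [this, Finset.card_erase_of_mem (Finset.mem_univ u), Finset.card_univ, Fintype.card_fin]
      have himg : ((Finset.univ.filter fun v : Fin n => v ≠ u).image (fun v => γ v u)) = Finset.range k := by
        apply Finset.eq_of_subset_of_card_le
        · intro c hc
          simp only [Finset.mem_image, Finset.mem_filter] at hc
          obtain ⟨v, ⟨_, hv⟩, rfl⟩ := hc
          exact Finset.mem_range.mpr (hbk v u hv)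
        · rw [Finset.card_range, Finset.card_image_of_injOn, hcard']
          · omega
          · intro a ha b hb hab
            by_contra hne
            exact hp2 a u b (Finset.mem_filter.mp ha).2 (Finset.mem_filter.mp hb).2 hne hab
      ext c
      simp only [inColors, Set.mem_setOf_eq, Finset.coe_range, Set.mem_Iio, ← himg,
        Finset.coe_image, Set.mem_image, Finset.mem_coe, Finset.mem_filter, Finset.mem_univ,
        true_and]
    have h01 : (⟨0, by omega⟩ : Fin n) ≠ ⟨1, by omega⟩ := by
      simp [Fin.ext_iff]
    apply hnd _ _ h01
    rw [Prod.ext_iff]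
    exact ⟨by rw [hout, hout], by rw [hin, hin]⟩
  · -- maxDeg
    have hout : ∀ u : Fin n, outDeg (fun u v : Fin n => u ≠ v) u = n - 1 := by
      intro u
      have : (Finset.univ.filter fun v : Fin n => u ≠ v) = Finset.univ.erase u := by
        ext v; simp [ne_comm, eq_comm]
      rw [outDeg, this, Finset.card_erase_of_mem (Finset.mem_univ u), Finset.card_univ,
        Fintype.card_fin]
    have hin : ∀ u : Fin n, inDeg (fun u v : Fin n => u ≠ v) u = n - 1 := by
      intro u
      have : (Finset.univ.filter fun v : Fin n => v ≠ u) = Finset.univ.erase u := by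
        ext v; simp
      rw [inDeg, this, Finset.card_erase_of_mem (Finset.mem_univ u), Finset.card_univ,
        Fintype.card_fin]
    have h0 : (⟨0, by omega⟩ : Fin n) ∈ Finset.univ := Finset.mem_univ _
    have hsup1 : Finset.univ.sup (outDeg (fun u v : Fin n => u ≠ v)) = n - 1 := by
      apply le_antisymm
      · exact Finset.sup_le fun u _ => le_of_eq (hout u)
      · exact le_trans (le_of_eq (hout ⟨0, by omega⟩).symm) (Finset.le_sup h0)
    have hsup2 : Finset.univ.sup (inDeg (fun u v : Fin n => u ≠ v)) = n - 1 := by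
      apply le_antisymm
      · exact Finset.sup_le fun u _ => le_of_eq (hin u)
      · exact le_trans (le_of_eq (hin ⟨0, by omega⟩).symm) (Finset.le_sup h0)
    rw [maxDeg, hsup1, hsup2]
    omega
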